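/- Let \mu_1,...,\mu_n be i.i.d. from a density f supported on [-1,1] with f \le C_d, and define the unbiased estimator \hat{\psi}(x,t) = (1/n)\sum_j ((\mu_j - x)/t)\varphi_t(x - \mu_j) of \psi(x,t) = (\varphi_t' * f)(x). Then for every x and t > 0, Var(\hat{\psi}(x,t)) \le (K/(n t^{3/2})) E_{z ~ N(0,1)}[f(x + \sqrt{t} z)] for a universal constant K. Consequently \int_R Var(\hat{\psi}(x,t)) dx \le K/(n t^{3/2}). -/

import Mathlib

open MeasureTheory ProbabilityTheory Real
open scoped ENNReal NNReal

/-- Density of `N(0,t)`. -/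
noncomputable def gaussDensity (t x : ℝ) : ℝ :=
  (Real.sqrt (2 * Real.pi * t))⁻¹ * Real.exp (-x ^ 2 / (2 * t))

/-- Standard Gaussian density. -/
noncomputable def stdGauss (x : ℝ) : ℝ := gaussDensity 1 x

noncomputable def gFun (x t μ : ℝ) : ℝ := ((μ - x) / t) * gaussDensity t (x - μ)

lemma gaussDensity_nonneg (t u : ℝ) : 0 ≤ gaussDensity t u := by
  unfold gaussDensity; positivity

lemma measurable_gFun (x t : ℝ) : Measurable (gFun x t) := by
  unfold gFun gaussDensity; fun_prop

lemma measurable_stdGauss : Measurable stdGauss := by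
  unfold stdGauss gaussDensity; fun_prop

lemma sq_mul_exp_le (s : ℝ) (hs : 0 ≤ s) : s * Real.exp (-s) ≤ 1 := by
  have h := Real.add_one_le_exp s
  have h2 : Real.exp (-s) * Real.exp s = 1 := by rw [← Real.exp_add]; simp
  nlinarith [Real.exp_pos (-s), Real.exp_pos s]

lemma abs_mul_exp_le {t : ℝ} (u : ℝ) (ht : 0 < t) :
    |u| * Real.exp (-u ^ 2 / (2 * t)) ≤ Real.sqrt t := by
  have h1 : u ^ 2 * Real.exp (-(u ^ 2 / t)) ≤ t := by
    have h := sq_mul_exp_le (u ^ 2 / t) (by positivity)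
    calc u ^ 2 * Real.exp (-(u ^ 2 / t)) = t * (u ^ 2 / t * Real.exp (-(u ^ 2 / t))) := by
          field_simp
    _ ≤ t * 1 := by nlinarith
    _ = t := mul_one t
  have h2 : (|u| * Real.exp (-u ^ 2 / (2 * t))) ^ 2 = u ^ 2 * Real.exp (-(u ^ 2 / t)) := by
    rw [mul_pow, sq_abs]
    congr 1
    rw [sq, ← Real.exp_add]
    congr 1
    field_simp
    ring
  calc |u| * Real.exp (-u ^ 2 / (2 * t))
      = Real.sqrt ((|u| * Real.exp (-u ^ 2 / (2 * t))) ^ 2) := by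
        rw [Real.sqrt_sq (by positivity)]
    _ ≤ Real.sqrt t := by rw [h2]; exact Real.sqrt_le_sqrt h1

lemma two_le_sqrt_two_pi : (2 : ℝ) ≤ Real.sqrt (2 * Real.pi) := by
  have h4 : (4:ℝ) ≤ 2 * Real.pi := by nlinarith [Real.pi_gt_three]
  calc (2:ℝ) = Real.sqrt 4 := by
        rw [show (4:ℝ) = 2 ^ 2 by norm_num, Real.sqrt_sq (by norm_num : (0:ℝ) ≤ 2)]
    _ ≤ Real.sqrt (2 * Real.pi) := Real.sqrt_le_sqrt h4

lemma key_pointwise {t : ℝ} (ht : 0 < t) (x z : ℝ) :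
    (gFun x t (x + Real.sqrt t * z)) ^ 2 ≤ stdGauss z / t ^ 2 := by
  have hst : (0:ℝ) < Real.sqrt t := Real.sqrt_pos.2 ht
  have hsq : Real.sqrt t ^ 2 = t := Real.sq_sqrt ht.le
  have hπ := Real.pi_pos
  unfold gFun stdGauss gaussDensity
  simp only [mul_one]
  have harg : (x - (x + Real.sqrt t * z)) ^ 2 = t * z ^ 2 := by
    rw [show x - (x + Real.sqrt t * z) = -(Real.sqrt t * z) by ring, neg_pow, mul_pow, hsq]
    ring
  have hexp : Real.exp (-(x - (x + Real.sqrt t * z)) ^ 2 / (2 * t)) = Real.exp (-z ^ 2 / 2) := by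
    rw [harg]; congr 1; field_simp
  have hnum : (x + Real.sqrt t * z - x) / t = Real.sqrt t * z / t := by ring_nf
  rw [hexp, hnum]
  have hA : (0:ℝ) < Real.exp (-z ^ 2 / 2) := Real.exp_pos _
  set A := Real.exp (-z ^ 2 / 2) with hAdef
  have hsqi : ((Real.sqrt (2 * Real.pi * t))⁻¹) ^ 2 = (2 * Real.pi * t)⁻¹ := by
    rw [inv_pow, Real.sq_sqrt (by positivity)]
  have hlhs : (Real.sqrt t * z / t * ((Real.sqrt (2 * Real.pi * t))⁻¹ * A)) ^ 2
      = z ^ 2 * (A * A) / (2 * Real.pi * t ^ 2) := by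
    rw [mul_pow, mul_pow, hsqi, div_pow, mul_pow, hsq, sq]
    field_simp
  rw [hlhs]
  have hza : z ^ 2 * A ≤ 2 := by
    have := sq_mul_exp_le (z ^ 2 / 2) (by positivity)
    have h2 : A = Real.exp (-(z ^ 2 / 2)) := by rw [hAdef]; congr 1; ring
    nlinarith [Real.exp_pos (-(z ^ 2 / 2))]
  have hs2 : (0:ℝ) < Real.sqrt (2 * Real.pi) := Real.sqrt_pos.2 (by positivity)
  have hss : Real.sqrt (2 * Real.pi) * Real.sqrt (2 * Real.pi) = 2 * Real.pi :=
    Real.mul_self_sqrt (by positivity)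
  have h2s := two_le_sqrt_two_pi
  set s2 := Real.sqrt (2 * Real.pi) with hs2def
  rw [div_le_div_iff₀ (by positivity) (by positivity)]
  have ht2 : (0:ℝ) < t ^ 2 := by positivity
  calc z ^ 2 * (A * A) * t ^ 2 = (z ^ 2 * A) * (A * t ^ 2) := by ring
    _ ≤ 2 * (A * t ^ 2) := mul_le_mul_of_nonneg_right hza (by positivity)
    _ ≤ s2 * (A * t ^ 2) := mul_le_mul_of_nonneg_right h2s (by positivity)
    _ = s2⁻¹ * A * (s2 * s2 * t ^ 2) := by field_simp
    _ = s2⁻¹ * A * (2 * Real.pi * t ^ 2) := by rw [hss]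

lemma stdGauss_nonneg (z : ℝ) : 0 ≤ stdGauss z := gaussDensity_nonneg 1 z

lemma gFun_abs_le {t : ℝ} (ht : 0 < t) (x μ : ℝ) :
    |gFun x t μ| ≤ (Real.sqrt (2 * Real.pi * t))⁻¹ * (Real.sqrt t / t) := by
  have key := abs_mul_exp_le (x - μ) ht
  have heq : |gFun x t μ|
      = (Real.sqrt (2 * Real.pi * t))⁻¹ * (|x - μ| * Real.exp (-(x - μ) ^ 2 / (2 * t)) / t) := by
    unfold gFun gaussDensity
    rw [abs_mul, abs_div, abs_of_pos ht, abs_mul,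
      abs_of_nonneg (a := (Real.sqrt (2 * Real.pi * t))⁻¹) (by positivity),
      abs_of_nonneg (Real.exp_pos _).le, abs_sub_comm μ x]
    ring
  rw [heq]
  gcongr

lemma integrable_stdGauss : Integrable stdGauss := by
  have h : Integrable (fun x : ℝ => Real.exp (-(1/2 : ℝ) * x ^ 2)) :=
    integrable_exp_neg_mul_sq (by norm_num)
  have heq : stdGauss = fun x : ℝ =>
      (Real.sqrt (2 * Real.pi))⁻¹ * Real.exp (-(1/2 : ℝ) * x ^ 2) := by
    funext x; unfold stdGauss gaussDensity; simp only [mul_one]; ring_nf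
  rw [heq]
  exact h.const_mul _

lemma integral_stdGauss : ∫ z, stdGauss z = 1 := by
  unfold stdGauss gaussDensity
  simp only [mul_one]
  rw [integral_const_mul]
  have h : (∫ z : ℝ, Real.exp (-z ^ 2 / 2)) = Real.sqrt (Real.pi / (1/2)) := by
    rw [← integral_gaussian (1/2 : ℝ)]
    congr 1; funext z; congr 1; ring
  rw [h, show Real.pi / (1/2 : ℝ) = 2 * Real.pi by ring]
  rw [inv_mul_cancel₀ (Real.sqrt_ne_zero'.2 (by positivity))]

/-- Given `n` i.i.d. samples `X j` from a density `f` supported on `[-1,1]` with `f ≤ C_d`,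
the unbiased estimator `ψ̂(x,t) = (1/n) ∑_j ((X_j - x)/t) φ_t(x - X_j)` of `(φ_t' * f)(x)`
satisfies, for a universal constant `K`,
`Var(ψ̂(x,t)) ≤ (K/(n t^{3/2})) E_{z~N(0,1)}[f(x + √t z)]` for every `x` and `t > 0`;
consequently `∫ Var(ψ̂(x,t)) dx ≤ K/(n t^{3/2})`. -/
theorem psi_hat_variance_bound :
    ∃ K : ℝ, 0 < K ∧
      ∀ (Ω : Type) (_ : MeasurableSpace Ω) (P : Measure Ω), IsProbabilityMeasure P →
      ∀ (n : ℕ), 0 < n →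
      ∀ (X : Fin n → Ω → ℝ), (∀ j, Measurable (X j)) →
      iIndepFun X P →
      ∀ (f : ℝ → ℝ) (C_d : ℝ), 0 < C_d → (∀ x, 0 ≤ f x) → Measurable f →
      (∀ x, x ∉ Set.Icc (-1 : ℝ) 1 → f x = 0) → (∀ x, f x ≤ C_d) → (∫ x, f x = 1) →
      (∀ j, Measure.map (X j) P = volume.withDensity (fun μ => ENNReal.ofReal (f μ))) →
      ∀ t : ℝ, 0 < t →
        ((∀ x : ℝ,
          variance (fun ω => (1 / (n : ℝ)) * ∑ j, ((X j ω - x) / t) *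
              gaussDensity t (x - X j ω)) P
            ≤ K / ((n : ℝ) * (t * Real.sqrt t)) *
                ∫ z, stdGauss z * f (x + Real.sqrt t * z)) ∧
        (∫ x : ℝ,
            variance (fun ω => (1 / (n : ℝ)) * ∑ j, ((X j ω - x) / t) *
              gaussDensity t (x - X j ω)) P)
          ≤ K / ((n : ℝ) * (t * Real.sqrt t))) := by
  refine ⟨1, one_pos, ?_⟩
  intro Ω mΩ P hP n hn X hXm hXind f C_d hCd hf0 hfm hfsupp hfle hfint hXmap t ht
  have hst : (0:ℝ) < Real.sqrt t := Real.sqrt_pos.2 ht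
  have htt : Real.sqrt t * Real.sqrt t = t := Real.mul_self_sqrt ht.le
  have hn' : (0:ℝ) < n := by exact_mod_cast hn
  -- integrability of f
  have hfInt : Integrable f := by
    have hind : Integrable ((Set.Icc (-1:ℝ) 1).indicator fun _ => C_d) := by
      rw [integrable_indicator_iff measurableSet_Icc]
      exact integrableOn_const (by rw [Real.volume_Icc]; exact ENNReal.ofReal_ne_top)
    refine hind.mono' hfm.aestronglyMeasurable (ae_of_all _ fun x => ?_)
    rw [Real.norm_eq_abs, abs_of_nonneg (hf0 x)]
    by_cases hx : x ∈ Set.Icc (-1:ℝ) 1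
    · rw [Set.indicator_of_mem hx]; exact hfle x
    · rw [Set.indicator_of_notMem hx, hfsupp x hx]
  -- the per-x second-moment bound
  have part1 : ∀ x : ℝ,
      variance (fun ω => (1 / (n : ℝ)) * ∑ j, ((X j ω - x) / t) *
        gaussDensity t (x - X j ω)) P
      ≤ 1 / ((n : ℝ) * (t * Real.sqrt t)) * ∫ z, stdGauss z * f (x + Real.sqrt t * z) := by
    intro x
    have hgm : Measurable (gFun x t) := measurable_gFun x t
    have hY : ∀ j : Fin n, MemLp (fun ω => gFun x t (X j ω)) 2 P := fun j =>
      MemLp.of_bound (hgm.comp (hXm j)).aestronglyMeasurable _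
        (ae_of_all _ fun ω => by rw [Real.norm_eq_abs]; exact gFun_abs_le ht x (X j ω))
    have h1 : variance (fun ω => (1 / (n : ℝ)) * ∑ j, ((X j ω - x) / t) *
          gaussDensity t (x - X j ω)) P
        = (1 / (n:ℝ)) ^ 2 * variance (∑ j : Fin n, fun ω => gFun x t (X j ω)) P := by
      rw [show (fun ω => (1 / (n:ℝ)) * ∑ j, ((X j ω - x) / t) * gaussDensity t (x - X j ω))
          = fun ω => (1 / (n:ℝ)) * (∑ j : Fin n, fun ω' => gFun x t (X j ω')) ω by
        funext ω; simp only [Finset.sum_apply]; rfl]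
      exact variance_const_mul _ _ _
    have h2 : variance (∑ j : Fin n, fun ω => gFun x t (X j ω)) P
        = ∑ j : Fin n, variance (fun ω => gFun x t (X j ω)) P := by
      refine IndepFun.variance_sum (fun j _ => hY j) ?_
      intro i _ j _ hij
      exact (hXind.indepFun hij).comp hgm hgm
    -- second moment bound for each term
    set V : ℝ := ∫ μ', f μ' * (gFun x t μ') ^ 2 with hV
    have h3 : ∀ j : Fin n, variance (fun ω => gFun x t (X j ω)) P ≤ V := by
      intro j
      have hvm := variance_le_expectation_sq (μ := P)
        (X := fun ω => gFun x t (X j ω)) (hgm.comp (hXm j)).aestronglyMeasurable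
      refine hvm.trans_eq ?_
      have hmap := integral_map (μ := P) (hXm j).aemeasurable
        (f := fun μ' => (gFun x t μ') ^ 2)
        ((hgm.pow_const 2).aestronglyMeasurable)
      rw [hXmap j] at hmap
      calc (∫ ω, ((fun ω => gFun x t (X j ω)) ^ 2) ω ∂P)
          = ∫ ω, (gFun x t (X j ω)) ^ 2 ∂P := by simp [Pi.pow_apply]
        _ = ∫ μ', (gFun x t μ') ^ 2 ∂(volume.withDensity fun μ' => ENNReal.ofReal (f μ')) :=
            hmap.symm
        _ = ∫ μ', (f μ').toNNReal • (gFun x t μ') ^ 2 := by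
            exact integral_withDensity_eq_integral_smul hfm.real_toNNReal _
        _ = V := by
            rw [hV]; congr 1; funext μ'
            rw [NNReal.smul_def, Real.coe_toNNReal _ (hf0 μ'), smul_eq_mul]
    -- change of variables and pointwise bound
    set I : ℝ := ∫ z, stdGauss z * f (x + Real.sqrt t * z) with hI
    have hI0 : 0 ≤ I := integral_nonneg fun z => mul_nonneg (stdGauss_nonneg z) (hf0 _)
    have hIm : Measurable fun z => stdGauss z * f (x + Real.sqrt t * z) :=
      measurable_stdGauss.mul (hfm.comp (by fun_prop))
    have hIint : Integrable (fun z => stdGauss z * f (x + Real.sqrt t * z)) := by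
      refine (integrable_stdGauss.const_mul C_d).mono' hIm.aestronglyMeasurable
        (ae_of_all _ fun z => ?_)
      rw [Real.norm_eq_abs, abs_of_nonneg (mul_nonneg (stdGauss_nonneg z) (hf0 _))]
      calc stdGauss z * f (x + Real.sqrt t * z) ≤ stdGauss z * C_d :=
            mul_le_mul_of_nonneg_left (hfle _) (stdGauss_nonneg z)
        _ = C_d * stdGauss z := mul_comm _ _
    have hchg : V = Real.sqrt t *
        ∫ z, f (x + Real.sqrt t * z) * (gFun x t (x + Real.sqrt t * z)) ^ 2 := by
      have hshift : V = ∫ u, f (x + u) * (gFun x t (x + u)) ^ 2 :=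
        (integral_add_left_eq_self (fun μ' => f μ' * (gFun x t μ') ^ 2) x).symm
      have hscale := Measure.integral_comp_mul_left
        (fun u => f (x + u) * (gFun x t (x + u)) ^ 2) (Real.sqrt t)
      rw [abs_of_pos (by positivity), smul_eq_mul] at hscale
      rw [hshift, hscale, ← mul_assoc, mul_inv_cancel₀ hst.ne', one_mul]
    have hmono : (∫ z, f (x + Real.sqrt t * z) * (gFun x t (x + Real.sqrt t * z)) ^ 2)
        ≤ (t ^ 2)⁻¹ * I := by
      have hRint : Integrable (fun z => f (x + Real.sqrt t * z) * (stdGauss z / t ^ 2)) := by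
        refine (hIint.div_const (t ^ 2)).congr (ae_of_all _ fun z => ?_)
        ring
      have h := integral_mono_of_nonneg
        (f := fun z => f (x + Real.sqrt t * z) * (gFun x t (x + Real.sqrt t * z)) ^ 2)
        (g := fun z => f (x + Real.sqrt t * z) * (stdGauss z / t ^ 2))
        (ae_of_all _ fun z => mul_nonneg (hf0 _) (sq_nonneg _)) hRint
        (ae_of_all _ fun z => mul_le_mul_of_nonneg_left (key_pointwise ht x z) (hf0 _))
      refine h.trans_eq ?_
      rw [show (fun z => f (x + Real.sqrt t * z) * (stdGauss z / t ^ 2))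
          = fun z => (t ^ 2)⁻¹ * (stdGauss z * f (x + Real.sqrt t * z)) from
        funext fun z => by ring, integral_const_mul]
    have hVle : V ≤ (t * Real.sqrt t)⁻¹ * I := by
      have hco : Real.sqrt t * (t ^ 2)⁻¹ = (t * Real.sqrt t)⁻¹ := by
        field_simp
        linear_combination htt
      calc V = Real.sqrt t *
            ∫ z, f (x + Real.sqrt t * z) * (gFun x t (x + Real.sqrt t * z)) ^ 2 := hchg
        _ ≤ Real.sqrt t * ((t ^ 2)⁻¹ * I) := mul_le_mul_of_nonneg_left hmono hst.le
        _ = (t * Real.sqrt t)⁻¹ * I := by rw [← mul_assoc, hco]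
    calc variance (fun ω => (1 / (n : ℝ)) * ∑ j, ((X j ω - x) / t) *
          gaussDensity t (x - X j ω)) P
        = (1 / (n:ℝ)) ^ 2 * ∑ j : Fin n, variance (fun ω => gFun x t (X j ω)) P := by
          rw [h1, h2]
      _ ≤ (1 / (n:ℝ)) ^ 2 * ((n:ℝ) * ((t * Real.sqrt t)⁻¹ * I)) := by
          refine mul_le_mul_of_nonneg_left ?_ (by positivity)
          calc ∑ j : Fin n, variance (fun ω => gFun x t (X j ω)) P
              ≤ ∑ _j : Fin n, (t * Real.sqrt t)⁻¹ * I :=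
                Finset.sum_le_sum fun j _ => (h3 j).trans hVle
            _ = (n:ℝ) * ((t * Real.sqrt t)⁻¹ * I) := by
                rw [Finset.sum_const, Finset.card_univ, Fintype.card_fin, nsmul_eq_mul]
      _ = 1 / ((n:ℝ) * (t * Real.sqrt t)) * I := by
          have hts : (0:ℝ) < t * Real.sqrt t := by positivity
          field_simp
  refine ⟨fun x => by simpa using part1 x, ?_⟩
  -- part 2
  have hFm : Measurable fun p : ℝ × ℝ => stdGauss p.2 * f (p.1 + Real.sqrt t * p.2) :=
    (measurable_stdGauss.comp measurable_snd).mul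
      (hfm.comp (measurable_fst.add (measurable_const.mul measurable_snd)))
  have hF0 : ∀ p : ℝ × ℝ, 0 ≤ stdGauss p.2 * f (p.1 + Real.sqrt t * p.2) :=
    fun p => mul_nonneg (stdGauss_nonneg _) (hf0 _)
  have hlf : (∫⁻ u, ENNReal.ofReal (f u)) = 1 := by
    rw [← ofReal_integral_eq_lintegral_ofReal hfInt (ae_of_all _ hf0), hfint,
      ENNReal.ofReal_one]
  have hlg : (∫⁻ z, ENNReal.ofReal (stdGauss z)) = 1 := by
    rw [← ofReal_integral_eq_lintegral_ofReal integrable_stdGauss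
      (ae_of_all _ stdGauss_nonneg), integral_stdGauss, ENNReal.ofReal_one]
  have hFint : Integrable (fun p : ℝ × ℝ => stdGauss p.2 * f (p.1 + Real.sqrt t * p.2))
      (volume.prod volume) := by
    refine ⟨hFm.aestronglyMeasurable, ?_⟩
    rw [HasFiniteIntegral]
    have hcalc : (∫⁻ p : ℝ × ℝ, ‖stdGauss p.2 * f (p.1 + Real.sqrt t * p.2)‖ₑ
        ∂(volume.prod volume)) = 1 := by
      have h1 : ∀ p : ℝ × ℝ, (‖stdGauss p.2 * f (p.1 + Real.sqrt t * p.2)‖ₑ : ℝ≥0∞)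
          = ENNReal.ofReal (stdGauss p.2) * ENNReal.ofReal (f (p.1 + Real.sqrt t * p.2)) :=
        fun p => by
          rw [Real.enorm_eq_ofReal (hF0 p), ENNReal.ofReal_mul (stdGauss_nonneg _)]
      simp_rw [h1]
      have hmeas : Measurable (fun p : ℝ × ℝ =>
          ENNReal.ofReal (stdGauss p.2) * ENNReal.ofReal (f (p.1 + Real.sqrt t * p.2))) := by
        apply Measurable.mul (f := fun p : ℝ × ℝ => ENNReal.ofReal (stdGauss p.2))
          (g := fun p : ℝ × ℝ => ENNReal.ofReal (f (p.1 + Real.sqrt t * p.2)))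
        · exact ENNReal.measurable_ofReal.comp (measurable_stdGauss.comp measurable_snd)
        · exact ENNReal.measurable_ofReal.comp
            (hfm.comp (measurable_fst.add (measurable_const.mul measurable_snd)))
      rw [lintegral_prod_symm _ hmeas.aemeasurable]
      have hin : ∀ z : ℝ, (∫⁻ x, ENNReal.ofReal (stdGauss z)
          * ENNReal.ofReal (f (x + Real.sqrt t * z))) = ENNReal.ofReal (stdGauss z) := by
        intro z
        have hm2 : Measurable (fun u : ℝ => ENNReal.ofReal (f (u + Real.sqrt t * z))) := by
          have hm3 : Measurable (fun u : ℝ => f (u + Real.sqrt t * z)) := hfm.comp (by fun_prop)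
          exact hm3.ennreal_ofReal
        rw [lintegral_const_mul _ hm2]
        rw [lintegral_add_right_eq_self (fun u => ENNReal.ofReal (f u)) (Real.sqrt t * z)]
        rw [hlf, mul_one]
      simp_rw [hin]
      exact hlg
    rw [hcalc]
    exact ENNReal.one_lt_top
  have hIint2 : Integrable (fun x => ∫ z, stdGauss z * f (x + Real.sqrt t * z)) := by
    have := hFint.integral_prod_left
    simpa using this
  have hIeq : (∫ x, ∫ z, stdGauss z * f (x + Real.sqrt t * z)) = 1 := by
    have hswap := integral_integral_swap
      (f := fun x z => stdGauss z * f (x + Real.sqrt t * z)) hFint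
    rw [hswap]
    have hin : ∀ z : ℝ, (∫ x, stdGauss z * f (x + Real.sqrt t * z)) = stdGauss z := by
      intro z
      rw [integral_const_mul, integral_add_right_eq_self f (Real.sqrt t * z), hfint, mul_one]
    simp_rw [hin]
    exact integral_stdGauss
  calc (∫ x : ℝ, variance (fun ω => (1 / (n : ℝ)) * ∑ j, ((X j ω - x) / t) *
        gaussDensity t (x - X j ω)) P)
      ≤ ∫ x, 1 / ((n:ℝ) * (t * Real.sqrt t)) * ∫ z, stdGauss z * f (x + Real.sqrt t * z) :=
        integral_mono_of_nonneg (ae_of_all _ fun x => variance_nonneg _ _)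
          (hIint2.const_mul _) (ae_of_all _ part1)
    _ = 1 / ((n:ℝ) * (t * Real.sqrt t)) *
        ∫ x, ∫ z, stdGauss z * f (x + Real.sqrt t * z) := integral_const_mul _ _
    _ = 1 / ((n:ℝ) * (t * Real.sqrt t)) := by rw [hIeq, mul_one]
    _ ≤ 1 / ((n:ℝ) * (t * Real.sqrt t)) := le_refl _
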